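/- Fix ε ∈ ℝ and suppose (u, v), (u′, v′) ∈ ℝ² satisfy the two equations (4·I11·u′ + 2·ε·v′·(I13·u′ + I23·v′))/(4 + ε²(u′² + v′²)) = (4·I11·u − 2·ε·v·(I13·u + I23·v))/(4 + ε²(u² + v²)) and (4·I22·v′ − 2·ε·u′·(I13·u′ + I23·v′))/(4 + ε²(u′² + v′²)) = (4·I22·v + 2·ε·u·(I13·u + I23·v))/(4 + ε²(u² + v²)). Then R(u′, v′) = R(u, v), where R(u, v) := 4·(I11·u² + I22·v²)·(4·I11·I22 + ε²·(I13·u + I23·v)²)/(4 + ε²(u² + v²))². -/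

import Mathlib

set_option maxHeartbeats 1000000 in
/-- The rational function `R` is an invariant of the discrete
Euler–Poincaré–Suslov equations of the Moser–Veselov type (Fedorov–Zenkov)
discretisation of the Suslov problem. -/
theorem suslov_discrete_invariant_moser_veselov
    (I11 I22 I13 I23 : ℝ) (hI11 : 0 < I11) (hI22 : 0 < I22)
    (ε u v u' v' : ℝ)
    (h1 : (4 * I11 * u' + 2 * ε * v' * (I13 * u' + I23 * v')) /
        (4 + ε ^ 2 * (u' ^ 2 + v' ^ 2)) =
      (4 * I11 * u - 2 * ε * v * (I13 * u + I23 * v)) / (4 + ε ^ 2 * (u ^ 2 + v ^ 2)))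
    (h2 : (4 * I22 * v' - 2 * ε * u' * (I13 * u' + I23 * v')) /
        (4 + ε ^ 2 * (u' ^ 2 + v' ^ 2)) =
      (4 * I22 * v + 2 * ε * u * (I13 * u + I23 * v)) / (4 + ε ^ 2 * (u ^ 2 + v ^ 2))) :
    4 * (I11 * u' ^ 2 + I22 * v' ^ 2) * (4 * I11 * I22 + ε ^ 2 * (I13 * u' + I23 * v') ^ 2) /
        (4 + ε ^ 2 * (u' ^ 2 + v' ^ 2)) ^ 2 =
      4 * (I11 * u ^ 2 + I22 * v ^ 2) * (4 * I11 * I22 + ε ^ 2 * (I13 * u + I23 * v) ^ 2) /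
        (4 + ε ^ 2 * (u ^ 2 + v ^ 2)) ^ 2 := by
  have hD : (4 : ℝ) + ε ^ 2 * (u ^ 2 + v ^ 2) ≠ 0 := by positivity
  have hD' : (4 : ℝ) + ε ^ 2 * (u' ^ 2 + v' ^ 2) ≠ 0 := by positivity
  have hI : (4 : ℝ) * I11 * I22 ≠ 0 := by positivity
  calc 4 * (I11 * u' ^ 2 + I22 * v' ^ 2) * (4 * I11 * I22 + ε ^ 2 * (I13 * u' + I23 * v') ^ 2) /
        (4 + ε ^ 2 * (u' ^ 2 + v' ^ 2)) ^ 2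
      = I22 * ((4 * I11 * u' + 2 * ε * v' * (I13 * u' + I23 * v')) /
          (4 + ε ^ 2 * (u' ^ 2 + v' ^ 2))) ^ 2 +
        I11 * ((4 * I22 * v' - 2 * ε * u' * (I13 * u' + I23 * v')) /
          (4 + ε ^ 2 * (u' ^ 2 + v' ^ 2))) ^ 2 := by
        rw [div_pow, div_pow, mul_div_assoc', mul_div_assoc', ← add_div]
        rw [div_eq_div_iff (by positivity) (by positivity)]
        ring
    _ = I22 * ((4 * I11 * u - 2 * ε * v * (I13 * u + I23 * v)) /
          (4 + ε ^ 2 * (u ^ 2 + v ^ 2))) ^ 2 +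
        I11 * ((4 * I22 * v + 2 * ε * u * (I13 * u + I23 * v)) /
          (4 + ε ^ 2 * (u ^ 2 + v ^ 2))) ^ 2 := by
        rw [h1, h2]
    _ = 4 * (I11 * u ^ 2 + I22 * v ^ 2) * (4 * I11 * I22 + ε ^ 2 * (I13 * u + I23 * v) ^ 2) /
        (4 + ε ^ 2 * (u ^ 2 + v ^ 2)) ^ 2 := by
        rw [div_pow, div_pow, mul_div_assoc', mul_div_assoc', ← add_div]
        rw [div_eq_div_iff (by positivity) (by positivity)]
        ring
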